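/- For any hypothesis class H and integer k >= 0, ELdim(H, k) <= sup { t : sum_{i=0}^{k+1} binom(t, i) <= S(H, t) }, where S(H, t) is the tree shattering coefficient. -/

import Mathlib

/-- A depth-`t` `X`-valued tree: a family of maps `x_s : {-1,+1}^(s-1) → X`. -/
def XTree (X : Type*) (t : ℕ) := (s : Fin t) → (Fin s.val → ℤ) → X

/-- A sign path: a sequence with entries in `{-1,+1}`. -/
def IsSignPath {t : ℕ} (ε : Fin t → ℤ) : Prop := ∀ s, ε s = 1 ∨ ε s = -1

/-- `S(H, x)`: the set of sign paths realized by some hypothesis `h ∈ H` along the tree `x`,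
i.e. `ε_s = h (x_s (ε_1, …, ε_{s-1}))` for all `s`. -/
def realizedPaths {X : Type*} (H : Set (X → ℤ)) {t : ℕ} (x : XTree X t) :
    Set (Fin t → ℤ) :=
  {ε | IsSignPath ε ∧ ∃ h ∈ H, ∀ s : Fin t,
    ε s = h (x s (fun i => ε ⟨i.val, i.isLt.trans s.isLt⟩))}

/-- The tree shattering coefficient `S(H, t)`: the maximum of `|S(H, x)|` over
all depth-`t` `X`-valued trees `x`. -/
noncomputable def treeShatter {X : Type*} (H : Set (X → ℤ)) (t : ℕ) : ℕ :=
  ⨆ x : XTree X t, (realizedPaths H x).ncard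

/-- An extended mistake tree: leaves are labeled by hypotheses, and each internal node
carries an example `a : X`, the label `y ∈ {-1,+1}` of its dashed downward edge
(the dashed edge goes to the child labeled `y`), and the two subtrees
(first the `-1`-child, then the `+1`-child). -/
inductive EMT (X : Type*) where
  | leaf : (X → ℤ) → EMT X
  | node : X → ℤ → EMT X → EMT X → EMT X

/-- Validity of an extended mistake tree for the class `H`: the dashed-edge labels are in
`{-1,+1}` and every leaf is labeled by a hypothesis of `H` consistent with the
root-to-leaf path (and satisfying the accumulated constraint `P`). -/
def EMT.ValidFrom {X : Type*} (H : Set (X → ℤ)) (P : (X → ℤ) → Prop) : EMT X → Prop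
  | .leaf h => h ∈ H ∧ P h
  | .node a y tneg tpos => (y = 1 ∨ y = -1) ∧
      EMT.ValidFrom H (fun h => P h ∧ h a = -1) tneg ∧
      EMT.ValidFrom H (fun h => P h ∧ h a = 1) tpos

/-- The set of pairs `(number of solid edges, length)` of root-to-leaf paths of an
extended mistake tree. An edge to a child is solid iff that child is not the one the
dashed edge points to. -/
def EMT.paths {X : Type*} : EMT X → Set (ℕ × ℕ)
  | .leaf _ => {(0, 0)}
  | .node _ y tneg tpos =>
      (fun p => (p.1 + (if y = -1 then 0 else 1), p.2 + 1)) '' EMT.paths tneg ∪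
      (fun p => (p.1 + (if y = 1 then 0 else 1), p.2 + 1)) '' EMT.paths tpos

/-- A tree is `(k,m)`-difficult iff every root-to-leaf path using at most `k` solid
edges has length at least `m`. -/
def EMT.Difficult {X : Type*} (T : EMT X) (k m : ℕ) : Prop :=
  ∀ p ∈ T.paths, p.1 ≤ k → m ≤ p.2


namespace Stmt15Aux

/-- weight of a boolean vector -/
def wt {m : ℕ} (σ : Fin m → Bool) : ℕ := ∑ i, if σ i = true then 1 else 0

lemma wt_succ {m : ℕ} (σ : Fin (m+1) → Bool) :
    wt σ = (if σ 0 = true then 1 else 0) + wt (σ ∘ Fin.succ) :=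
  Fin.sum_univ_succ _

lemma wt_eq_false {m : ℕ} {σ : Fin m → Bool} (h : wt σ ≤ 0) : σ = fun _ => false := by
  funext i
  by_contra hc
  have hi : σ i = true := by revert hc; cases σ i <;> simp
  have h1 : (if σ i = true then 1 else 0 : ℕ) ≤ wt σ :=
    Finset.single_le_sum (f := fun j => if σ j = true then 1 else 0)
      (fun j _ => Nat.zero_le _) (Finset.mem_univ i)
  rw [if_pos hi] at h1
  omega

lemma exists_mem {X : Type*} (H : Set (X → ℤ)) :
    ∀ (T : EMT X) (P : (X → ℤ) → Prop), T.ValidFrom H P → ∃ h, h ∈ H ∧ P h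
  | .leaf h, P, hv => ⟨h, hv⟩
  | .node a y tneg tpos, P, hv => by
      obtain ⟨h, hH, hP, _⟩ := exists_mem H tneg _ hv.2.1
      exact ⟨h, hH, hP⟩

lemma budget0 {X : Type*} (H : Set (X → ℤ))
    (hsign : ∀ h ∈ H, ∀ a : X, h a = 1 ∨ h a = -1)
    (m : ℕ) (a : X) (T : EMT X) (P : (X → ℤ) → Prop) (hv : T.ValidFrom H P) :
    ∃ (x : XTree X m) (F : (Fin m → Bool) → (Fin m → ℤ)),
      (∀ σ, wt σ ≤ 0 → F σ ∈ realizedPaths {h | h ∈ H ∧ P h} x) ∧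
      (∀ σ τ, wt σ ≤ 0 → wt τ ≤ 0 → F σ = F τ → σ = τ) := by
  obtain ⟨h, hH, hP⟩ := exists_mem H T P hv
  exact ⟨fun _ _ => a, fun _ _ => h a,
    fun σ _ => ⟨fun s => hsign h hH a, h, ⟨hH, hP⟩, fun s => rfl⟩,
    fun σ τ hσ hτ _ => (wt_eq_false hσ).trans (wt_eq_false hτ).symm⟩

def extendTree {X : Type*} {m : ℕ} (a : X) (y : ℤ) (xd xs : XTree X m) : XTree X (m+1) :=
  fun s => match s with
  | ⟨0, _⟩ => fun _ => a
  | ⟨j+1, hj⟩ => fun ε =>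
      if ε ⟨0, Nat.succ_pos j⟩ = y
      then xd ⟨j, Nat.lt_of_succ_lt_succ hj⟩ (fun i => ε ⟨i.val+1, Nat.succ_lt_succ i.isLt⟩)
      else xs ⟨j, Nat.lt_of_succ_lt_succ hj⟩ (fun i => ε ⟨i.val+1, Nat.succ_lt_succ i.isLt⟩)

lemma extendTree_zero {X : Type*} {m : ℕ} (a : X) (y : ℤ) (xd xs : XTree X m)
    (ε : Fin (0 : Fin (m+1)).val → ℤ) : extendTree a y xd xs 0 ε = a := rfl

lemma extendTree_succ {X : Type*} {m : ℕ} (a : X) (y : ℤ) (xd xs : XTree X m)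
    (j : Fin m) (ε : Fin (j.succ.val) → ℤ) :
    extendTree a y xd xs j.succ ε =
      if ε ⟨0, Nat.succ_pos j.val⟩ = y
      then xd j (fun i => ε ⟨i.val+1, Nat.succ_lt_succ i.isLt⟩)
      else xs j (fun i => ε ⟨i.val+1, Nat.succ_lt_succ i.isLt⟩) := rfl

lemma cons_mk_zero (n : ℕ) (z : ℤ) (p : Fin n → ℤ) (h : 0 < n+1) :
    Fin.cons (α := fun _ => ℤ) z p ⟨0, h⟩ = z := rfl

lemma cons_mk_succ (n : ℕ) (z : ℤ) (p : Fin n → ℤ) (i : ℕ) (h : i+1 < n+1) :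
    Fin.cons (α := fun _ => ℤ) z p ⟨i+1, h⟩ = p ⟨i, Nat.lt_of_succ_lt_succ h⟩ := rfl

lemma combine {X : Type*} (H : Set (X → ℤ)) (P : (X → ℤ) → Prop) {m k : ℕ}
    (a : X) (y ys : ℤ) (hy : y = 1 ∨ y = -1) (hys : ys = 1 ∨ ys = -1) (hne : ys ≠ y)
    (xd : XTree X m) (Fd : (Fin m → Bool) → (Fin m → ℤ))
    (hFd : ∀ σ, wt σ ≤ k + 1 → Fd σ ∈ realizedPaths {h | h ∈ H ∧ (P h ∧ h a = y)} xd)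
    (hFdi : ∀ σ τ, wt σ ≤ k + 1 → wt τ ≤ k + 1 → Fd σ = Fd τ → σ = τ)
    (xs : XTree X m) (Fs : (Fin m → Bool) → (Fin m → ℤ))
    (hFs : ∀ σ, wt σ ≤ k → Fs σ ∈ realizedPaths {h | h ∈ H ∧ (P h ∧ h a = ys)} xs)
    (hFsi : ∀ σ τ, wt σ ≤ k → wt τ ≤ k → Fs σ = Fs τ → σ = τ) :
    ∃ (x : XTree X (m+1)) (F : (Fin (m+1) → Bool) → (Fin (m+1) → ℤ)),
      (∀ σ, wt σ ≤ k + 1 → F σ ∈ realizedPaths {h | h ∈ H ∧ P h} x) ∧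
      (∀ σ τ, wt σ ≤ k + 1 → wt τ ≤ k + 1 → F σ = F τ → σ = τ) := by
  refine ⟨extendTree a y xd xs,
    fun σ => if σ 0 = true then Fin.cons ys (Fs (σ ∘ Fin.succ))
             else Fin.cons y (Fd (σ ∘ Fin.succ)), ?_, ?_⟩
  · intro σ hσ
    beta_reduce
    have hw := wt_succ σ
    by_cases hc : σ 0 = true
    · rw [if_pos hc]
      rw [hc] at hw; simp only [if_true] at hw
      obtain ⟨hsp, h, ⟨hH, hPh, hay⟩, hcons⟩ := hFs (σ ∘ Fin.succ) (by omega)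
      refine ⟨?_, h, ⟨hH, hPh⟩, ?_⟩
      · intro s
        induction s using Fin.cases with
        | zero => simpa using hys
        | succ j => simpa using hsp j
      · intro s
        induction s using Fin.cases with
        | zero =>
          simp only [Fin.cons_zero, extendTree_zero]
          exact hay.symm
        | succ j =>
          simp only [Fin.cons_succ, extendTree_succ, cons_mk_zero, cons_mk_succ,
            Fin.val_succ]
          simp only [hne, ↓reduceIte]
          exact hcons j
    · rw [if_neg hc]
      simp [hc] at hw
      obtain ⟨hsp, h, ⟨hH, hPh, hay⟩, hcons⟩ := hFd (σ ∘ Fin.succ) (by omega)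
      refine ⟨?_, h, ⟨hH, hPh⟩, ?_⟩
      · intro s
        induction s using Fin.cases with
        | zero => simpa using hy
        | succ j => simpa using hsp j
      · intro s
        induction s using Fin.cases with
        | zero =>
          simp only [Fin.cons_zero, extendTree_zero]
          exact hay.symm
        | succ j =>
          simp only [Fin.cons_succ, extendTree_succ, cons_mk_zero, cons_mk_succ,
            Fin.val_succ]
          rw [if_pos trivial]
          exact hcons j
  · intro σ τ hσ hτ heq
    beta_reduce at heq
    have hwσ := wt_succ σ
    have hwτ := wt_succ τ
    have h0 : σ 0 = τ 0 := by
      by_contra hcc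
      have e0 := congrFun heq 0
      cases hσ0 : σ 0 <;> cases hτ0 : τ 0
      · exact hcc (hσ0.trans hτ0.symm)
      · rw [if_neg (by simp [hσ0]), if_pos hτ0] at e0
        simp only [Fin.cons_zero] at e0
        exact hne e0.symm
      · rw [if_pos hσ0, if_neg (by simp [hτ0])] at e0
        simp only [Fin.cons_zero] at e0
        exact hne e0
      · exact hcc (hσ0.trans hτ0.symm)
    cases hc : σ 0 with
    | true =>
      have hτ0 : τ 0 = true := h0 ▸ hc
      rw [if_pos hc, if_pos hτ0] at heq
      rw [hc] at hwσ; rw [hτ0] at hwτ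
      simp only [if_true] at hwσ hwτ
      have htail : (σ ∘ Fin.succ) = (τ ∘ Fin.succ) := by
        apply hFsi _ _ (by omega) (by omega)
        funext i
        have := congrFun heq i.succ
        simpa [Fin.cons_succ] using this
      funext s
      induction s using Fin.cases with
      | zero => rw [hc, hτ0]
      | succ j => exact congrFun htail j
    | false =>
      have hτ0 : τ 0 = false := h0 ▸ hc
      rw [if_neg (by simp [hc]), if_neg (by simp [hτ0])] at heq
      simp [hc] at hwσ
      simp [hτ0] at hwτ
      have htail : (σ ∘ Fin.succ) = (τ ∘ Fin.succ) := by
        apply hFdi _ _ (by omega) (by omega)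
        funext i
        have := congrFun heq i.succ
        simpa [Fin.cons_succ] using this
      funext s
      induction s using Fin.cases with
      | zero => rw [hc, hτ0]
      | succ j => exact congrFun htail j

lemma key {X : Type*} (H : Set (X → ℤ))
    (hsign : ∀ h ∈ H, ∀ a : X, h a = 1 ∨ h a = -1) :
    ∀ (m k : ℕ) (T : EMT X) (P : (X → ℤ) → Prop),
      T.ValidFrom H P → T.Difficult k m →
      ∃ (x : XTree X m) (F : (Fin m → Bool) → (Fin m → ℤ)),
        (∀ σ, wt σ ≤ k + 1 → F σ ∈ realizedPaths {h | h ∈ H ∧ P h} x) ∧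
        (∀ σ τ, wt σ ≤ k + 1 → wt τ ≤ k + 1 → F σ = F τ → σ = τ) := by
  intro m
  induction m with
  | zero =>
    intro k T P hv _
    obtain ⟨h, hH, hP⟩ := exists_mem H T P hv
    exact ⟨fun s => s.elim0, fun _ => Fin.elim0,
      fun σ _ => ⟨fun s => s.elim0, h, ⟨hH, hP⟩, fun s => s.elim0⟩,
      fun σ τ _ _ _ => funext fun i => i.elim0⟩
  | succ m ih =>
    intro k T P hv hd
    match T with
    | .leaf h =>
      exact absurd (hd (0,0) rfl (Nat.zero_le _)) (by omega)
    | .node a y tneg tpos =>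
      obtain ⟨hy, hvneg, hvpos⟩ := hv
      rcases hy with hy1 | hy1
      · -- y = 1 : dashed child is tpos, solid child is tneg
        subst hy1
        have hdd : tpos.Difficult k m := by
          intro p hp hpk
          have hmem : ((p.1, p.2 + 1) : ℕ × ℕ) ∈ (EMT.node a 1 tneg tpos).paths := by
            simp only [EMT.paths]
            right
            exact ⟨p, hp, by norm_num⟩
          have := hd _ hmem hpk
          omega
        obtain ⟨xd, Fd, hFd, hFdi⟩ := ih k tpos _ hvpos hdd
        obtain ⟨xs, Fs, hFs, hFsi⟩ :
            ∃ (xs : XTree X m) (Fs : (Fin m → Bool) → (Fin m → ℤ)),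
              (∀ σ, wt σ ≤ k →
                Fs σ ∈ realizedPaths {h | h ∈ H ∧ (P h ∧ h a = -1)} xs) ∧
              (∀ σ τ, wt σ ≤ k → wt τ ≤ k → Fs σ = Fs τ → σ = τ) := by
          match k with
          | 0 => exact budget0 H hsign m a tneg _ hvneg
          | k + 1 =>
            have hds : tneg.Difficult k m := by
              intro p hp hpk
              have hmem : ((p.1 + 1, p.2 + 1) : ℕ × ℕ) ∈
                  (EMT.node a 1 tneg tpos).paths := by
                simp only [EMT.paths]
                left
                exact ⟨p, hp, by norm_num⟩
              have := hd _ hmem (by omega)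
              omega
            exact ih k tneg _ hvneg hds
        exact combine H P a 1 (-1) (Or.inl rfl) (Or.inr rfl) (by norm_num)
          xd Fd hFd hFdi xs Fs hFs hFsi
      · -- y = -1 : dashed child is tneg, solid child is tpos
        subst hy1
        have hdd : tneg.Difficult k m := by
          intro p hp hpk
          have hmem : ((p.1, p.2 + 1) : ℕ × ℕ) ∈ (EMT.node a (-1) tneg tpos).paths := by
            simp only [EMT.paths]
            left
            exact ⟨p, hp, by norm_num⟩
          have := hd _ hmem hpk
          omega
        obtain ⟨xd, Fd, hFd, hFdi⟩ := ih k tneg _ hvneg hdd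
        obtain ⟨xs, Fs, hFs, hFsi⟩ :
            ∃ (xs : XTree X m) (Fs : (Fin m → Bool) → (Fin m → ℤ)),
              (∀ σ, wt σ ≤ k →
                Fs σ ∈ realizedPaths {h | h ∈ H ∧ (P h ∧ h a = 1)} xs) ∧
              (∀ σ τ, wt σ ≤ k → wt τ ≤ k → Fs σ = Fs τ → σ = τ) := by
          match k with
          | 0 => exact budget0 H hsign m a tpos _ hvpos
          | k + 1 =>
            have hds : tpos.Difficult k m := by
              intro p hp hpk
              have hmem : ((p.1 + 1, p.2 + 1) : ℕ × ℕ) ∈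
                  (EMT.node a (-1) tneg tpos).paths := by
                simp only [EMT.paths]
                right
                exact ⟨p, hp, by norm_num⟩
              have := hd _ hmem (by omega)
              omega
            exact ih k tpos _ hvpos hds
        exact combine H P a (-1) 1 (Or.inr rfl) (Or.inl rfl) (by norm_num)
          xd Fd hFd hFdi xs Fs hFs hFsi

lemma card_wt_le (m b : ℕ) :
    (Finset.univ.filter (fun σ : Fin m → Bool => wt σ ≤ b)).card
      = ∑ i ∈ Finset.range (b + 1), m.choose i := by
  have hwt : ∀ σ : Fin m → Bool,
      wt σ = (Finset.univ.filter (fun i => σ i = true)).card := by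
    intro σ
    rw [Finset.card_filter]
    rfl
  have hcard : (Finset.univ.filter (fun σ : Fin m → Bool => wt σ ≤ b)).card
      = (Finset.univ.filter (fun S : Finset (Fin m) => S.card ≤ b)).card := by
    refine Finset.card_nbij' (fun σ => Finset.univ.filter (fun i => σ i = true))
      (fun S => fun i => decide (i ∈ S)) ?_ ?_ ?_ ?_
    · intro σ hσ
      simp only [Finset.coe_filter, Set.mem_setOf_eq, Finset.mem_filter, Finset.mem_univ, true_and] at hσ ⊢
      rw [← hwt σ]; exact hσ
    · intro S hS
      simp only [Finset.coe_filter, Set.mem_setOf_eq, Finset.mem_filter, Finset.mem_univ, true_and] at hS ⊢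
      rw [hwt]
      simpa using hS
    · intro σ hσ
      funext i
      simp
    · intro S hS
      ext i
      simp
  rw [hcard]
  have hsplit : (Finset.univ.filter (fun S : Finset (Fin m) => S.card ≤ b))
      = (Finset.range (b + 1)).biUnion
          (fun i => Finset.powersetCard i (Finset.univ : Finset (Fin m))) := by
    ext S
    simp [Finset.mem_powersetCard, Nat.lt_succ_iff]
  rw [hsplit, Finset.card_biUnion]
  · apply Finset.sum_congr rfl
    intro i _
    rw [Finset.card_powersetCard, Finset.card_univ, Fintype.card_fin]
  · intro i _ j _ hij
    simp only [Finset.disjoint_left]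
    intro S hSi hSj
    rw [Finset.mem_powersetCard] at hSi hSj
    exact hij (hSi.2 ▸ hSj.2 ▸ rfl)

lemma rp_subset_range {X : Type*} (H : Set (X → ℤ)) {t : ℕ} (x : XTree X t) :
    realizedPaths H x ⊆
      Set.range (fun b : Fin t → Bool => fun i => if b i then (1 : ℤ) else -1) := by
  rintro ε ⟨hsp, -⟩
  refine ⟨fun i => decide (ε i = 1), funext fun i => ?_⟩
  rcases hsp i with h | h <;> simp [h]

lemma rp_finite {X : Type*} (H : Set (X → ℤ)) {t : ℕ} (x : XTree X t) :
    (realizedPaths H x).Finite :=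
  Set.Finite.subset (Set.finite_range _) (rp_subset_range H x)

lemma le_treeShatter {X : Type*} (H : Set (X → ℤ)) {t : ℕ} (x : XTree X t) :
    (realizedPaths H x).ncard ≤ treeShatter H t := by
  unfold treeShatter
  refine le_ciSup (f := fun x : XTree X t => (realizedPaths H x).ncard) ?_ x
  refine ⟨(Set.range (fun b : Fin t → Bool => fun i => if b i then (1 : ℤ) else -1)).ncard, ?_⟩
  rintro n ⟨x', rfl⟩
  exact Set.ncard_le_ncard (rp_subset_range H x') (Set.finite_range _)

end Stmt15Aux

theorem stmt15 {X : Type*} (H : Set (X → ℤ))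
    (hsign : ∀ h ∈ H, ∀ a : X, h a = 1 ∨ h a = -1)
    (k : ℕ) (m : ℕ)
    (hm : ∃ T : EMT X, T.ValidFrom H (fun _ => True) ∧ T.Difficult k m) :
    (m : ℕ∞) ≤ ⨆ (t : ℕ) (_ : ∑ i ∈ Finset.range (k + 2), t.choose i ≤ treeShatter H t),
      (t : ℕ∞) := by
  obtain ⟨T, hv, hd⟩ := hm
  obtain ⟨x, F, hF, hFi⟩ := Stmt15Aux.key H hsign m k T _ hv hd
  set D : Finset (Fin m → Bool) := Finset.univ.filter (fun σ => Stmt15Aux.wt σ ≤ k + 1)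
    with hD
  have hsub : (F '' ↑D) ⊆ realizedPaths H x := by
    rintro ε ⟨σ, hσ, rfl⟩
    obtain ⟨hsp, h, ⟨hH, -⟩, hc⟩ := hF σ (by simpa [hD] using hσ)
    exact ⟨hsp, h, hH, hc⟩
  have hinj : Set.InjOn F ↑D := by
    intro σ hσ τ hτ heq
    exact hFi σ τ (by simpa [hD] using hσ) (by simpa [hD] using hτ) heq
  have hcard : ∑ i ∈ Finset.range (k + 2), m.choose i ≤ (realizedPaths H x).ncard := by
    calc ∑ i ∈ Finset.range (k + 2), m.choose i = D.card :=
          (Stmt15Aux.card_wt_le m (k + 1)).symm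
    _ = (F '' ↑D).ncard := by rw [Set.ncard_image_of_injOn hinj, Set.ncard_coe_finset]
    _ ≤ _ := Set.ncard_le_ncard hsub (Stmt15Aux.rp_finite H x)
  have hcond : ∑ i ∈ Finset.range (k + 2), m.choose i ≤ treeShatter H m :=
    hcard.trans (Stmt15Aux.le_treeShatter H x)
  exact le_iSup₂ (f := fun (t : ℕ)
    (_ : ∑ i ∈ Finset.range (k + 2), t.choose i ≤ treeShatter H t) => (t : ℕ∞)) m hcond
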